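/- arXiv:1808.09836 — 2 statements merged into one kernel-verified Lean document; each statement's English description precedes it below -/
import Mathlib

section
/- Let G be a bipartite graph with bipartition classes A, B such that A is countably infinite and A is ℵ₀-star-linked (every finite subset of A has infinite common neighbourhood in B). Fix a ∈ A and any x ∈ A \ {a}. Then there is a generalised path R of order type ω in G whose first vertex is a, whose vertex set contains A, such that R is {x}-robust, and moreover R − x admits a path order of order type ω with first vertex a. -/
open Cardinal

universe u

/-- A generalised path structure on the whole vertex set of `G`: a well-order `r`
such that every vertex's down-neighbours are cofinal below it. -/
def IsGenPath {V : Type*} (G : SimpleGraph V) (r : V → V → Prop) : Prop :=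
  IsWellOrder V r ∧ ∀ v v' : V, r v' v → ∃ w : V, G.Adj v w ∧ r w v ∧ ¬ r w v'

/-- A generalised path in `G` with vertex set `S` and path order `r`. -/
def IsGenPathRel {V : Type*} (G : SimpleGraph V) (S : Set V) (r : S → S → Prop) : Prop :=
  IsWellOrder S r ∧
    ∀ v v' : S, r v' v → ∃ w : S, G.Adj (v : V) (w : V) ∧ r w v ∧ ¬ r w v'

open Classical in
noncomputable def relType {α : Type u} (r : α → α → Prop) : Ordinal.{u} :=
  if h : IsWellOrder α r then @Ordinal.type α r h else 0

/-- `v` is a limit element of the order `r` : neither minimal nor a successor. -/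
def IsLimitElem {α : Type*} (r : α → α → Prop) (v : α) : Prop :=
  (∃ w, r w v) ∧ ∀ w, r w v → ∃ u, r w u ∧ r u v

/-- The set of limit elements of a path order on `S`, as a subset of the ambient vertex set. -/
def LimitSet {V : Type*} (S : Set V) (r : S → S → Prop) : Set V :=
  {v | ∃ h : v ∈ S, IsLimitElem r ⟨v, h⟩}

/-- `A` is `κ`-star-linked in `B`: every finite subset of `A` has common
neighbourhood of cardinality `κ` inside `B`. -/
def StarLinked {V : Type*} (G : SimpleGraph V) (κ : Cardinal) (A B : Set V) : Prop :=
  ∀ F : Finset V, ↑F ⊆ A → #{b : V | b ∈ B ∧ ∀ v ∈ F, G.Adj v b} = κ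

/-- The spanning subgraph of `G` consisting of the edges of colour `i`. -/
def colourSub {V : Type*} (G : SimpleGraph V) {n : ℕ} (c : V → V → Fin n) (i : Fin n) :
    SimpleGraph V where
  Adj u v := G.Adj u v ∧ c u v = i ∧ c v u = i
  symm := by constructor; rintro u v ⟨h, h1, h2⟩; exact ⟨h.symm, h2, h1⟩
  loopless := by constructor; rintro v ⟨h, -⟩; exact G.loopless.irrefl v h

/-- `A` is `κ`-star-linked in `B` in colour `i`. -/
def StarLinkedC {V : Type*} (G : SimpleGraph V) {n : ℕ} (c : V → V → Fin n) (i : Fin n)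
    (κ : Cardinal) (A B : Set V) : Prop :=
  StarLinked (colourSub G c i) κ A B

/-- `G` is a graph of type `H_{κ,κ}` with main class `A` and second class `B`. -/
def IsTypeH {V : Type u} (κ : Cardinal.{u}) (G : SimpleGraph V) (A B : Set V) : Prop :=
  A ∪ B = Set.univ ∧
    ∃ (ι : Type u) (_ : LinearOrder ι) (a b : ι → V),
      relType ((· < ·) : ι → ι → Prop) = κ.ord ∧
      A = Set.range a ∧ B = Set.range b ∧
      ∀ ξ ζ : ι, ξ ≤ ζ → a ξ ≠ b ζ → G.Adj (a ξ) (b ζ)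

/-- `U` is `<κ`-inseparable in `H`: no two of its vertices can be separated by
deleting fewer than `κ` vertices. -/
def Insep {V : Type*} (κ : Cardinal) (H : SimpleGraph V) (U : Set V) : Prop :=
  ∀ u ∈ U, ∀ v ∈ U, u ≠ v → ∀ W : Set V, #W < κ →
    ∀ (hu : u ∉ W) (hv : v ∉ W), (H.induce Wᶜ).Reachable ⟨u, hu⟩ ⟨v, hv⟩

/-- The bipartite subgraph of `G` consisting of the edges between `S` and `T`. -/
def between {V : Type*} (G : SimpleGraph V) (S T : Set V) : SimpleGraph V where
  Adj u v := G.Adj u v ∧ ((u ∈ S ∧ v ∈ T) ∨ (u ∈ T ∧ v ∈ S))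
  symm := by constructor; rintro u v ⟨h, h'⟩; exact ⟨h.symm, h'.symm.imp And.symm And.symm⟩
  loopless := by constructor; rintro v ⟨h, -⟩; exact G.loopless.irrefl v h

noncomputable def pick {V : Type*} (S : ℕ → Set V) (h : ∀ i, (S i).Infinite) : ℕ → V
  | n => ((h n).diff (Set.finite_range (fun i : Fin n => pick S h i.1))).nonempty.some
  decreasing_by all_goals exact i.isLt

lemma pick_spec {V : Type*} (S : ℕ → Set V) (h : ∀ i, (S i).Infinite) (n : ℕ) :
    pick S h n ∈ S n \ Set.range (fun i : Fin n => pick S h i.1) := by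
  rw [pick]
  exact Set.Nonempty.some_mem _

lemma pick_mem {V : Type*} (S : ℕ → Set V) (h : ∀ i, (S i).Infinite) (n : ℕ) :
    pick S h n ∈ S n := (pick_spec S h n).1

lemma pick_inj {V : Type*} (S : ℕ → Set V) (h : ∀ i, (S i).Infinite) :
    Function.Injective (pick S h) := by
  intro m n hmn
  by_contra hne
  rcases Nat.lt_or_ge m n with hlt | hge
  · exact (pick_spec S h n).2 ⟨⟨m, hlt⟩, hmn⟩
  · have hlt : n < m := by omega
    exact (pick_spec S h m).2 ⟨⟨n, hlt⟩, hmn.symm⟩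


/-- in a bipartite graph with countably infinite `ℵ₀`-star-linked
class `A`, for `a ∈ A` and `x ∈ A \ {a}` there is an `{x}`-robust ray starting
at `a` and covering `A`, such that the ray on the remaining vertices after
deleting `x` can also start at `a`. -/
theorem stmt7 {V : Type*} (G : SimpleGraph V) (A B : Set V)
    (hdisj : Disjoint A B) (hcov : A ∪ B = Set.univ)
    (hbip : ∀ u v, G.Adj u v → (u ∈ A ∧ v ∈ B) ∨ (u ∈ B ∧ v ∈ A))
    (hAcble : A.Countable) (hAinf : A.Infinite)
    (hstar : ∀ F : Finset V, ↑F ⊆ A → {b : V | ∀ v ∈ F, G.Adj v b}.Infinite)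
    (a : V) (ha : a ∈ A) (x : V) (hxA : x ∈ A) (hxa : x ≠ a) :
    ∃ f : ℕ → V, Function.Injective f ∧ f 0 = a ∧ A ⊆ Set.range f ∧
      (∀ n, G.Adj (f n) (f (n + 1))) ∧
      ∃ g : ℕ → V, Function.Injective g ∧ g 0 = a ∧
        Set.range g = Set.range f \ {x} ∧ ∀ n, G.Adj (g n) (g (n + 1)) := by
  classical
  have hCnt : Countable ↥A := hAcble.to_subtype
  have hInf : Infinite ↥A := hAinf.to_subtype
  obtain ⟨e₀⟩ : Nonempty (ℕ ≃ ↥A) := nonempty_equiv_of_countable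
  set e : ℕ ≃ ↥A := (Equiv.swap 0 (e₀.symm ⟨a, ha⟩)).trans e₀ with he
  have he0 : (e 0 : V) = a := by
    simp [he, Equiv.swap_apply_left]
  set α : ℕ → V := fun n => (e n : V) with hα
  have hαA : ∀ n, α n ∈ A := fun n => (e n).2
  have hαinj : Function.Injective α := fun m n hmn => e.injective (Subtype.ext hmn)
  have hα0 : α 0 = a := he0
  -- x = α k with k ≠ 0
  obtain ⟨k, hk⟩ := e.surjective ⟨x, hxA⟩
  have hkx : α k = x := by rw [hα]; exact congrArg Subtype.val hk
  have hk0 : k ≠ 0 := by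
    rintro rfl; exact hxa (hkx ▸ hα0)
  -- the sets of common neighbours
  set S : ℕ → Set V := fun i => {v | ∀ j ≤ i + 2, G.Adj (α j) v} with hSdef
  have hS : ∀ i, (S i).Infinite := by
    intro i
    have hsub : ↑((Finset.range (i + 3)).image α) ⊆ A := by
      intro v hv
      simp only [Finset.coe_image, Set.mem_image, Finset.coe_range, Set.mem_Iio] at hv
      obtain ⟨j, -, rfl⟩ := hv
      exact hαA j
    refine (hstar _ hsub).mono ?_
    intro v hv j hj
    exact hv (α j) (Finset.mem_image_of_mem α (Finset.mem_range.mpr (by omega)))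
  set b : ℕ → V := pick S hS with hb
  have hbinj : Function.Injective b := pick_inj S hS
  have hab : ∀ j i, j ≤ i + 2 → G.Adj (α j) (b i) := fun j i hj => pick_mem S hS i j hj
  have hbB : ∀ i, b i ∈ B := by
    intro i
    rcases hbip (α 0) (b i) (hab 0 i (by omega)) with h | h
    · exact h.2
    · exact absurd (hαA 0) (fun hA => Set.disjoint_left.mp hdisj hA h.1)
  have hne : ∀ i j, α i ≠ b j := by
    intro i j h
    exact Set.disjoint_left.mp hdisj (hαA i) (h ▸ hbB j)
  -- the ray f
  set f : ℕ → V := fun n => if n % 2 = 0 then α (n / 2) else b (n / 2) with hf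
  have hfe : ∀ m, f (2 * m) = α m := by
    intro m
    have h1 : (2 * m) % 2 = 0 := by omega
    have h2 : (2 * m) / 2 = m := by omega
    simp [hf, h1, h2]
  have hfo : ∀ m, f (2 * m + 1) = b m := by
    intro m
    have h1 : (2 * m + 1) % 2 = 1 := by omega
    have h2 : (2 * m + 1) / 2 = m := by omega
    simp [hf, h1, h2]
  have hfinj : Function.Injective f := by
    intro m n hmn
    simp only [hf] at hmn
    split_ifs at hmn with h1 h2 h2
    · have := hαinj hmn; omega
    · exact absurd hmn (hne _ _)
    · exact absurd hmn.symm (hne _ _)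
    · have := hbinj hmn; omega
  -- the index map for g
  set t : ℕ → ℕ := fun m => if m < k then m else m + 1 with ht
  have htinj : Function.Injective t := by
    intro m n hmn; simp only [ht] at hmn; split_ifs at hmn <;> omega
  have htk : ∀ m, t m ≠ k := by intro m; simp only [ht]; split_ifs <;> omega
  have htrange : ∀ j, j ≠ k → ∃ m, t m = j := by
    intro j hj
    rcases Nat.lt_or_ge j k with h | h
    · exact ⟨j, by simp [ht, h]⟩
    · refine ⟨j - 1, ?_⟩
      simp only [ht]
      split_ifs <;> omega
  have htle : ∀ m, t m ≤ m + 1 := by intro m; simp only [ht]; split_ifs <;> omega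
  set g : ℕ → V := fun n => if n % 2 = 0 then α (t (n / 2)) else b (n / 2) with hg
  have hge : ∀ m, g (2 * m) = α (t m) := by
    intro m
    have h1 : (2 * m) % 2 = 0 := by omega
    have h2 : (2 * m) / 2 = m := by omega
    simp [hg, h1, h2]
  have hgo : ∀ m, g (2 * m + 1) = b m := by
    intro m
    have h1 : (2 * m + 1) % 2 = 1 := by omega
    have h2 : (2 * m + 1) / 2 = m := by omega
    simp [hg, h1, h2]
  refine ⟨f, hfinj, (hfe 0).trans hα0, ?_, ?_, g, ?_, ?_, ?_, ?_⟩
  · -- A ⊆ range f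
    intro v hv
    obtain ⟨m, hm⟩ := e.surjective ⟨v, hv⟩
    exact ⟨2 * m, by rw [hfe m, hα]; exact congrArg Subtype.val hm⟩
  · -- adjacency of f
    intro n
    rcases Nat.even_or_odd n with ⟨m, hm⟩ | ⟨m, hm⟩
    · subst hm
      rw [show m + m = 2 * m by ring, hfe m, show 2 * m + 1 = 2 * m + 1 from rfl, hfo m]
      exact hab m m (by omega)
    · subst hm
      rw [show 2 * m + 1 + 1 = 2 * (m + 1) by ring, hfo m, hfe (m + 1)]
      exact (hab (m + 1) m (by omega)).symm
  · -- g injective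
    intro m n hmn
    simp only [hg] at hmn
    split_ifs at hmn with h1 h2 h2
    · have := htinj (hαinj hmn); omega
    · exact absurd hmn (hne _ _)
    · exact absurd hmn.symm (hne _ _)
    · have := hbinj hmn; omega
  · -- g 0 = a
    have : t 0 = 0 := by simp only [ht]; split_ifs <;> omega
    simpa [this, hα0] using hge 0
  · -- range g = range f \ {x}
    ext v
    constructor
    · rintro ⟨n, rfl⟩
      rcases Nat.even_or_odd n with ⟨m, hm⟩ | ⟨m, hm⟩
      · subst hm
        rw [show m + m = 2 * m by ring, hge m]
        refine ⟨⟨2 * t m, hfe (t m)⟩, ?_⟩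
        simp only [Set.mem_singleton_iff]
        intro h
        exact htk m (hαinj (h.trans hkx.symm))
      · subst hm
        rw [hgo m]
        refine ⟨⟨2 * m + 1, hfo m⟩, ?_⟩
        simp only [Set.mem_singleton_iff]
        intro h
        exact hne k m (by rw [hkx]; exact h.symm)
    · rintro ⟨⟨n, rfl⟩, hvx⟩
      simp only [Set.mem_singleton_iff] at hvx
      rcases Nat.even_or_odd n with ⟨m, hm⟩ | ⟨m, hm⟩
      · subst hm
        rw [show m + m = 2 * m by ring] at hvx ⊢
        rw [hfe m] at hvx ⊢
        have hmk : m ≠ k := by rintro rfl; exact hvx hkx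
        obtain ⟨m', hm'⟩ := htrange m hmk
        exact ⟨2 * m', by rw [hge m', hm']⟩
      · subst hm
        rw [hfo m]
        exact ⟨2 * m + 1, hgo m⟩
  · -- adjacency of g
    intro n
    rcases Nat.even_or_odd n with ⟨m, hm⟩ | ⟨m, hm⟩
    · subst hm
      rw [show m + m = 2 * m by ring, hge m, hgo m]
      exact hab (t m) m (by have := htle m; omega)
    · subst hm
      rw [show 2 * m + 1 + 1 = 2 * (m + 1) by ring, hgo m, hge (m + 1)]
      exact (hab (t (m + 1)) m (by have := htle (m + 1); omega)).symm
end

section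
/- Let κ be an infinite cardinal, G a graph with A, B ⊆ V(G), |A| = κ, and suppose A is κ-star-linked in B. Then there is a partition {B', B''} of B into two sets such that A is κ-star-linked in B'' and the bipartite graph G[A, B'] contains a perfect matching of A into B' (an injection m: A → B' with a adjacent to m(a) for all a ∈ A). -/
open Cardinal

universe u

theorem exists_greedy_pick {α V : Type u} [LinearOrder α] [WellFoundedLT α]
    (κ : Cardinal.{u}) (S : α → Set V) (hS : ∀ x, κ ≤ #(S x))
    (hsmall : ∀ x : α, #(Set.Iio x) < κ) :
    ∃ f : α → V, (∀ x, f x ∈ S x) ∧ Function.Injective f := by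
  have key : ∀ (x : α) (ih : ∀ y, y < x → V),
      (S x \ {v | ∃ y, ∃ h : y < x, ih y h = v}).Nonempty := by
    intro x ih
    rw [Set.nonempty_iff_ne_empty]
    intro hemp
    have hsub : S x ⊆ {v | ∃ y, ∃ h : y < x, ih y h = v} := by
      intro v hv
      by_contra hnv
      exact Set.notMem_empty v (hemp ▸ ⟨hv, hnv⟩)
    have h1 : #(S x) ≤ #{v | ∃ y, ∃ h : y < x, ih y h = v} :=
      Cardinal.mk_le_mk_of_subset hsub
    have h2 : #{v | ∃ y, ∃ h : y < x, ih y h = v} ≤ #(Set.Iio x) := by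
      have he : {v | ∃ y, ∃ h : y < x, ih y h = v} =
          Set.range (fun y : Set.Iio x => ih y.1 y.2) := by
        ext v
        constructor
        · rintro ⟨y, h, rfl⟩; exact ⟨⟨y, h⟩, rfl⟩
        · rintro ⟨⟨y, h⟩, rfl⟩; exact ⟨y, h, rfl⟩
      rw [he]
      exact Cardinal.mk_range_le
    exact absurd ((hS x).trans (h1.trans h2)) (hsmall x).not_ge
  have wf : WellFounded ((· < ·) : α → α → Prop) := wellFounded_lt
  let f : α → V := wf.fix (fun x ih => (key x ih).choose)
  have hfix : ∀ x : α, f x = (key x (fun y _ => f y)).choose := fun x =>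
    wf.fix_eq _ x
  have hmem : ∀ x, f x ∈ S x ∧ f x ∉ {v | ∃ y, ∃ h : y < x, f y = v} := by
    intro x
    rw [hfix x]
    exact (key x (fun y _ => f y)).choose_spec
  refine ⟨f, fun x => (hmem x).1, ?_⟩
  intro x y hxy
  by_contra hne
  rcases lt_or_gt_of_ne hne with h | h
  · exact (hmem y).2 ⟨x, h, hxy⟩
  · exact (hmem x).2 ⟨y, h, hxy.symm⟩


/-- if `|A| = κ` and `A` is `κ`-star-linked in `B`, then `B` can be
partitioned into `B'` and `B''` such that `A` is `κ`-star-linked in `B''` and there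
is a perfect matching of `A` into `B'`. -/
theorem stmt13 {V : Type u} (κ : Cardinal.{u}) (hκ : ℵ₀ ≤ κ)
    (G : SimpleGraph V) (A B : Set V) (hA : #A = κ)
    (hAB : StarLinked G κ A B) :
    ∃ B' B'' : Set V, Disjoint B' B'' ∧ B' ∪ B'' = B ∧
      StarLinked G κ A B'' ∧
      ∃ m : A → V, Function.Injective m ∧
        ∀ a : A, m a ∈ B' ∧ G.Adj (a : V) (m a) := by
  classical
  have hAinf : Infinite A := by
    rw [Cardinal.infinite_iff, hA]; exact hκ
  -- the index type of tasks
  let T := (A ⊕ (Finset A × A) : Type u)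
  have hTcard : #T = κ := by
    have : #T = #A + #(Finset A) * #A := by
      simp [T, Cardinal.mk_sum, Cardinal.mk_prod]
    rw [this, Cardinal.mk_finset_of_infinite, hA, Cardinal.mul_eq_self hκ,
      Cardinal.add_eq_self hκ]
  have hα : #(κ.ord.ToType) = κ := by
    rw [mk_toType, Cardinal.card_ord]
  obtain ⟨e⟩ : Nonempty (κ.ord.ToType ≃ T) := Cardinal.eq.mp (hα.trans hTcard.symm)
  -- each task has a finite target constraint set
  let task : T → Finset V := fun t =>
    match t with
    | .inl a => {a.1}
    | .inr (F, _) => F.image Subtype.val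
  have htask : ∀ t, ↑(task t) ⊆ A := by
    rintro (a | ⟨F, a⟩)
    · intro v hv
      simp only [task, Finset.coe_singleton, Set.mem_singleton_iff] at hv
      exact hv ▸ a.2
    · intro v hv
      simp only [task, Finset.coe_image, Set.mem_image, Finset.mem_coe] at hv
      obtain ⟨⟨w, hw⟩, -, rfl⟩ := hv
      exact hw
  let S : κ.ord.ToType → Set V := fun x => {b | b ∈ B ∧ ∀ v ∈ task (e x), G.Adj v b}
  have hS : ∀ x, κ ≤ #(S x) := fun x => (hAB _ (htask _)).ge
  obtain ⟨f, hfmem, hfinj⟩ :=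
    exists_greedy_pick κ S hS (fun x => Cardinal.mk_Iio_ord_toType x)
  let g : T → V := fun t => f (e.symm t)
  have hginj : Function.Injective g := hfinj.comp e.symm.injective
  have hgmem : ∀ t, g t ∈ B ∧ ∀ v ∈ task t, G.Adj v (g t) := by
    intro t
    have := hfmem (e.symm t)
    simpa [S, g] using this
  let m : A → V := fun a => g (Sum.inl a)
  have hmB : Set.range m ⊆ B := by
    rintro v ⟨a, rfl⟩
    exact (hgmem (Sum.inl a)).1
  refine ⟨Set.range m, B \ Set.range m, Set.disjoint_sdiff_right,
    Set.union_diff_cancel hmB, ?_, m, ?_, ?_⟩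
  · -- still star-linked in the rest
    intro F hF
    apply le_antisymm
    · rw [← hAB F hF]
      apply Cardinal.mk_le_mk_of_subset
      intro b hb
      exact ⟨hb.1.1, hb.2⟩
    · -- build an injection from A
      let emb : { x // x ∈ F.attach } ↪ A :=
        ⟨fun x => ⟨x.1.1, hF x.1.2⟩, by
          rintro ⟨⟨x, hx⟩, hx'⟩ ⟨⟨y, hy⟩, hy'⟩ h
          simpa using congrArg Subtype.val h⟩
      let F' : Finset A := F.attach.attach.map emb
      have hF' : F'.image Subtype.val = F := by
        ext v
        simp only [F', Finset.mem_image, Finset.mem_map, Finset.mem_attach,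
          true_and, emb, Function.Embedding.coeFn_mk]
        constructor
        · rintro ⟨a, ⟨x, -, rfl⟩, rfl⟩
          exact x.1.2
        · intro hv
          exact ⟨⟨v, hF hv⟩, ⟨⟨⟨v, hv⟩, Finset.mem_attach _ _⟩, rfl⟩, rfl⟩
      have hφ : ∀ a : A, g (Sum.inr (F', a)) ∈
          {b : V | b ∈ B \ Set.range m ∧ ∀ v ∈ F, G.Adj v b} := by
        intro a
        have h1 := hgmem (Sum.inr (F', a))
        refine ⟨⟨h1.1, ?_⟩, ?_⟩
        · rintro ⟨a', ha'⟩
          exact Sum.inl_ne_inr (hginj ha')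
        · intro v hv
          apply h1.2
          simp only [task]
          rw [hF']
          exact hv
      rw [← hA]
      exact Cardinal.mk_le_of_injective (f := fun a : A =>
        (⟨g (Sum.inr (F', a)), hφ a⟩ :
          {b : V | b ∈ B \ Set.range m ∧ ∀ v ∈ F, G.Adj v b})) (by
        intro a a' h
        have := hginj (congrArg Subtype.val h)
        simpa using Sum.inr.inj this)
  · intro a a' h
    exact Sum.inl.inj (hginj h)
  · intro a
    refine ⟨⟨a, rfl⟩, ?_⟩
    have := (hgmem (Sum.inl a)).2 a.1 (by simp [task])
    exact this
end
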